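/- Let w be the optimal weight function defined by w(x)^{-1} = (1/m) Σ_{j=1}^m φ_j(x)², where (φ_1,…,φ_m) is an orthonormal basis of V_m in L²_μ(X). Then for every v ∈ L²_μ(X) with ‖v‖_{∞,w} = sup_{x∈X} w(x)^{1/2}|v(x)| < ∞, the orthogonal projection satisfies ‖P_{V_m} v‖_{∞,w} ≤ m ‖v‖_{∞,w}; in particular the constant c_m = sup{‖P_{V_m}v‖_{∞,w} : ‖v‖_{∞,w} ≤ 1} satisfies c_m ≤ m. -/

import Mathlib

open MeasureTheory ProbabilityTheory

noncomputable section

/-- Spectral norm (matrix operator norm w.r.t. the Euclidean norm) of a real square matrix. -/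
def specNorm {m : ℕ} (A : Matrix (Fin m) (Fin m) ℝ) : ℝ :=
  ‖Matrix.toEuclideanCLM (𝕜 := ℝ) A‖

variable {d : ℕ}

/-- Squared `L²_μ` norm: `‖v‖² = ∫ v² dμ`. -/
def l2normSq {X : Set (Fin d → ℝ)} (μ : Measure X) (v : X → ℝ) : ℝ :=
  ∫ t, v t ^ 2 ∂μ

/-- Squared discrete semi-norm `‖v‖²_{x^n} = (1/n) ∑ᵢ w(xⁱ) v(xⁱ)²`. -/
def discNormSq {X : Set (Fin d → ℝ)} (w : X → ℝ) {n : ℕ} (x : Fin n → X) (v : X → ℝ) : ℝ :=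
  (1 / (n : ℝ)) * ∑ i, w (x i) * v (x i) ^ 2

/-- Empirical Gram matrix `G_{x^n} = (1/n) ∑ᵢ w(xⁱ) φ(xⁱ) ⊗ φ(xⁱ)`. -/
def gram {X : Set (Fin d → ℝ)} {m : ℕ} (w : X → ℝ) (φ : Fin m → X → ℝ) {n : ℕ}
    (x : Fin n → X) : Matrix (Fin m) (Fin m) ℝ :=
  Matrix.of fun j k => (1 / (n : ℝ)) * ∑ i, w (x i) * (φ j (x i) * φ k (x i))

/-- Stability statistic `Z_{x^n} = ‖G_{x^n} − I‖₂`. -/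
def Zstat {X : Set (Fin d → ℝ)} {m : ℕ} (w : X → ℝ) (φ : Fin m → X → ℝ) {n : ℕ}
    (x : Fin n → X) : ℝ :=
  specNorm (gram w φ x - 1)

/-- Orthogonal projection onto `V_m`: `P_{V_m} u = ∑ⱼ (∫ u φⱼ dμ) φⱼ`. -/
def proj {X : Set (Fin d → ℝ)} (μ : Measure X) {m : ℕ} (φ : Fin m → X → ℝ) (u : X → ℝ) :
    X → ℝ :=
  fun t => ∑ j, (∫ s, u s * φ j s ∂μ) * φ j t

/-- Weighted supremum norm `‖v‖_{∞,w} = sup_x w(x)^{1/2} |v(x)|`. -/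
def wSupNorm {X : Set (Fin d → ℝ)} (w : X → ℝ) (v : X → ℝ) : ℝ :=
  ⨆ t : X, Real.sqrt (w t) * |v t|

/-- The approximation space `V_m`, the span of `φ_1, …, φ_m`. -/
def Vspan {X : Set (Fin d → ℝ)} {m : ℕ} (φ : Fin m → X → ℝ) : Submodule ℝ (X → ℝ) :=
  Submodule.span ℝ (Set.range φ)

/-- for the optimal weight `w⁻¹ = (1/m) ∑ φⱼ²`, the orthogonal projection
satisfies `‖P_{V_m} v‖_{∞,w} ≤ m ‖v‖_{∞,w}`; in particular `c_m ≤ m`. -/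
theorem projection_weighted_sup_bound
    {m : ℕ} {X : Set (Fin d → ℝ)} (μ : Measure X) [IsProbabilityMeasure μ]
    (φ : Fin m → X → ℝ) (hφm : ∀ j, Measurable (φ j)) (hφ2 : ∀ j, MemLp (φ j) 2 μ)
    (hortho : ∀ i j, (∫ t, φ i t * φ j t ∂μ) = if i = j then (1 : ℝ) else 0)
    (w : X → ℝ) (hwopt : ∀ t, (w t)⁻¹ = (1 / (m : ℝ)) * ∑ j, φ j t ^ 2) :
    (∀ v : X → ℝ, MemLp v 2 μ →
        BddAbove (Set.range fun t : X => Real.sqrt (w t) * |v t|) →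
        wSupNorm w (proj μ φ v) ≤ m * wSupNorm w v) ∧
      sSup {r : ℝ | ∃ v : X → ℝ, MemLp v 2 μ ∧ wSupNorm w v ≤ 1 ∧
          r = wSupNorm w (proj μ φ v)} ≤ m := by
  classical
  have hw0 : ∀ t, 0 ≤ w t := by
    intro t
    have h : 0 ≤ (w t)⁻¹ := by rw [hwopt t]; positivity
    exact inv_nonneg.mp h
  have hsq_int : ∀ j, Integrable (fun t => φ j t ^ 2) μ := fun j => (hφ2 j).integrable_sq
  have hmul_int : ∀ (f g : X → ℝ), MemLp f 2 μ → MemLp g 2 μ →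
      Integrable (fun t => f t * g t) μ := by
    intro f g hf hg
    refine Integrable.mono' ((hf.integrable_sq.add hg.integrable_sq).div_const 2)
      (hf.1.mul hg.1) (Filter.Eventually.of_forall fun t => ?_)
    simp only [Pi.add_apply]
    rw [Real.norm_eq_abs, abs_mul]
    nlinarith [sq_abs (f t), sq_abs (g t), abs_nonneg (f t), abs_nonneg (g t),
      sq_nonneg (|f t| - |g t|)]
  have hinv_int : Integrable (fun t => (w t)⁻¹) μ := by
    have h : (fun t : X => (w t)⁻¹) = fun t => (1/(m:ℝ)) * ∑ j, φ j t ^ 2 := funext hwopt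
    rw [h]
    exact (integrable_finset_sum _ fun j _ => hsq_int j).const_mul _
  have hφsq_integral : ∀ j, ∫ t, φ j t ^ 2 ∂μ = 1 := by
    intro j
    simpa [sq] using hortho j j
  have hwsum : ∀ t, w t * ∑ j, φ j t ^ 2 ≤ (m : ℝ) := by
    intro t
    rcases eq_or_ne m 0 with hm | hm
    · subst hm; simp
    · have h1 : ∑ j, φ j t ^ 2 = (m : ℝ) * (w t)⁻¹ := by
        rw [hwopt t]; field_simp
      rw [h1]
      rcases eq_or_lt_of_le (hw0 t) with h0 | h0
      · rw [← h0, zero_mul]; positivity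
      · have hc : w t * (w t)⁻¹ = 1 := mul_inv_cancel₀ h0.ne'
        have heq : w t * ((m:ℝ) * (w t)⁻¹) = (m:ℝ) := by
          calc w t * ((m:ℝ) * (w t)⁻¹) = (m:ℝ) * (w t * (w t)⁻¹) := by ring
          _ = (m:ℝ) := by rw [hc, mul_one]
        exact le_of_eq heq
  -- generic pointwise bound on the projection
  have hgen : ∀ (v : X → ℝ) (t : X), Real.sqrt (w t) * |proj μ φ v t| ≤
      Real.sqrt ((∑ j, (∫ s, v s * φ j s ∂μ) ^ 2) * m) := by
    intro v t
    have hcs : (∑ j, (∫ s, v s * φ j s ∂μ) * φ j t) ^ 2 ≤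
        (∑ j, (∫ s, v s * φ j s ∂μ) ^ 2) * ∑ j, φ j t ^ 2 :=
      Finset.sum_mul_sq_le_sq_mul_sq _ _ _
    have hp : proj μ φ v t = ∑ j, (∫ s, v s * φ j s ∂μ) * φ j t := rfl
    have h1 : w t * (proj μ φ v t) ^ 2 ≤ (∑ j, (∫ s, v s * φ j s ∂μ) ^ 2) * m := by
      rw [hp]
      calc w t * (∑ j, (∫ s, v s * φ j s ∂μ) * φ j t) ^ 2
          ≤ w t * ((∑ j, (∫ s, v s * φ j s ∂μ) ^ 2) * ∑ j, φ j t ^ 2) :=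
            mul_le_mul_of_nonneg_left hcs (hw0 t)
        _ = (∑ j, (∫ s, v s * φ j s ∂μ) ^ 2) * (w t * ∑ j, φ j t ^ 2) := by ring
        _ ≤ (∑ j, (∫ s, v s * φ j s ∂μ) ^ 2) * m :=
            mul_le_mul_of_nonneg_left (hwsum t) (by positivity)
    calc Real.sqrt (w t) * |proj μ φ v t| = Real.sqrt (w t * (proj μ φ v t) ^ 2) := by
          rw [Real.sqrt_mul (hw0 t), Real.sqrt_sq_eq_abs]
      _ ≤ Real.sqrt ((∑ j, (∫ s, v s * φ j s ∂μ) ^ 2) * m) := Real.sqrt_le_sqrt h1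
  -- Part 1
  have key : ∀ v : X → ℝ, MemLp v 2 μ →
      BddAbove (Set.range fun t : X => Real.sqrt (w t) * |v t|) →
      wSupNorm w (proj μ φ v) ≤ m * wSupNorm w v := by
    intro v hv hb
    set S := wSupNorm w v with hS
    have hSt : ∀ t, Real.sqrt (w t) * |v t| ≤ S := fun t => le_ciSup hb t
    have hS0 : 0 ≤ S := by
      rcases isEmpty_or_nonempty X with hX | hX
      · rw [hS]; simp [wSupNorm, Real.iSup_of_isEmpty]
      · exact le_trans (by positivity) (hSt (Classical.arbitrary X))
    have hc : ∀ j, |∫ s, v s * φ j s ∂μ| ≤ S := by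
      intro j
      have hmpos : (0:ℝ) < m := by exact_mod_cast j.pos
      have hpt : ∀ t, |v t * φ j t| ≤ S * (((w t)⁻¹ + φ j t ^ 2) / 2) := by
        intro t
        rcases eq_or_lt_of_le (hw0 t) with h0 | h0
        · have hz : (1/(m:ℝ)) * ∑ k, φ k t ^ 2 = 0 := by rw [← hwopt t, ← h0]; simp
          have hsum0 : ∑ k, φ k t ^ 2 = 0 := by
            rcases mul_eq_zero.mp hz with h | h
            · exact absurd h (by positivity)
            · exact h
          have hj : φ j t ^ 2 = 0 :=
            (Finset.sum_eq_zero_iff_of_nonneg (fun k _ => sq_nonneg (φ k t))).mp hsum0 j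
              (Finset.mem_univ j)
          have hj' : φ j t = 0 := by
            have := sq_eq_zero_iff.mp hj
            exact this
          rw [hj', mul_zero, abs_zero]
          positivity
        · have hsw : 0 < Real.sqrt (w t) := Real.sqrt_pos.mpr h0
          have h1 : |v t| ≤ S * Real.sqrt ((w t)⁻¹) := by
            rw [Real.sqrt_inv, ← div_eq_mul_inv, le_div_iff₀ hsw]
            calc |v t| * Real.sqrt (w t) = Real.sqrt (w t) * |v t| := mul_comm _ _
              _ ≤ S := hSt t
          have h2 : Real.sqrt ((w t)⁻¹) * |φ j t| ≤ ((w t)⁻¹ + φ j t ^ 2) / 2 := by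
            nlinarith [sq_nonneg (Real.sqrt ((w t)⁻¹) - |φ j t|),
              Real.sq_sqrt (inv_nonneg.mpr (hw0 t)), sq_abs (φ j t),
              Real.sqrt_nonneg ((w t)⁻¹), abs_nonneg (φ j t)]
          calc |v t * φ j t| = |v t| * |φ j t| := abs_mul _ _
            _ ≤ (S * Real.sqrt ((w t)⁻¹)) * |φ j t| :=
                mul_le_mul_of_nonneg_right h1 (abs_nonneg _)
            _ = S * (Real.sqrt ((w t)⁻¹) * |φ j t|) := by ring
            _ ≤ S * (((w t)⁻¹ + φ j t ^ 2) / 2) := mul_le_mul_of_nonneg_left h2 hS0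
      have hinv_integral : ∫ t, (w t)⁻¹ ∂μ = 1 := by
        have h : (fun t : X => (w t)⁻¹) = fun t => (1/(m:ℝ)) * ∑ k, φ k t ^ 2 := funext hwopt
        rw [h, integral_const_mul, integral_finset_sum _ (fun k _ => hsq_int k)]
        simp only [hφsq_integral, Finset.sum_const, Finset.card_univ, Fintype.card_fin,
          nsmul_eq_mul, mul_one]
        field_simp
      have hdom_int : Integrable (fun t => S * (((w t)⁻¹ + φ j t ^ 2) / 2)) μ :=
        ((hinv_int.add (hsq_int j)).div_const 2).const_mul S
      have h3 : |∫ s, v s * φ j s ∂μ| ≤ ∫ s, |v s * φ j s| ∂μ := by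
        calc |∫ s, v s * φ j s ∂μ| = ‖∫ s, v s * φ j s ∂μ‖ := (Real.norm_eq_abs _).symm
          _ ≤ ∫ s, ‖v s * φ j s‖ ∂μ := norm_integral_le_integral_norm _
          _ = ∫ s, |v s * φ j s| ∂μ := by simp only [Real.norm_eq_abs]
      have h4 : ∫ s, |v s * φ j s| ∂μ ≤ ∫ s, S * (((w s)⁻¹ + φ j s ^ 2) / 2) ∂μ :=
        integral_mono_of_nonneg (Filter.Eventually.of_forall fun s => abs_nonneg _)
          hdom_int (Filter.Eventually.of_forall hpt)
      have h5 : ∫ s, S * (((w s)⁻¹ + φ j s ^ 2) / 2) ∂μ = S := by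
        rw [integral_const_mul, integral_div, integral_add hinv_int (hsq_int j),
          hinv_integral, hφsq_integral j]
        norm_num
      linarith
    have hcc : (∑ j, (∫ s, v s * φ j s ∂μ) ^ 2) ≤ m * S ^ 2 := by
      calc (∑ j, (∫ s, v s * φ j s ∂μ) ^ 2) ≤ ∑ _j : Fin m, S ^ 2 := by
            refine Finset.sum_le_sum fun j _ => ?_
            calc (∫ s, v s * φ j s ∂μ) ^ 2 = |∫ s, v s * φ j s ∂μ| ^ 2 := (sq_abs _).symm
              _ ≤ S ^ 2 := pow_le_pow_left₀ (abs_nonneg _) (hc j) 2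
        _ = m * S ^ 2 := by simp [Finset.sum_const, mul_comm]
    have hfinal : ∀ t, Real.sqrt (w t) * |proj μ φ v t| ≤ m * S := by
      intro t
      refine (hgen v t).trans ?_
      have h1 : (∑ j, (∫ s, v s * φ j s ∂μ) ^ 2) * m ≤ ((m : ℝ) * S) ^ 2 := by
        calc (∑ j, (∫ s, v s * φ j s ∂μ) ^ 2) * m ≤ (m * S ^ 2) * m :=
              mul_le_mul_of_nonneg_right hcc (Nat.cast_nonneg m)
          _ = ((m : ℝ) * S) ^ 2 := by ring
      calc Real.sqrt ((∑ j, (∫ s, v s * φ j s ∂μ) ^ 2) * m)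
          ≤ Real.sqrt (((m : ℝ) * S) ^ 2) := Real.sqrt_le_sqrt h1
        _ = (m : ℝ) * S := Real.sqrt_sq (by positivity)
    rcases isEmpty_or_nonempty X with hX | hX
    · have : wSupNorm w (proj μ φ v) = 0 := Real.iSup_of_isEmpty _
      rw [this]; positivity
    · exact ciSup_le hfinal
  refine ⟨key, ?_⟩
  by_cases hA : BddAbove {r : ℝ | ∃ v : X → ℝ, MemLp v 2 μ ∧ wSupNorm w v ≤ 1 ∧
      r = wSupNorm w (proj μ φ v)}
  · obtain ⟨M, hM⟩ := hA
    refine Real.sSup_le ?_ (Nat.cast_nonneg m)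
    rintro r ⟨v, hv2, hv1, rfl⟩
    by_cases hb : BddAbove (Set.range fun t : X => Real.sqrt (w t) * |v t|)
    · calc wSupNorm w (proj μ φ v) ≤ m * wSupNorm w v := key v hv2 hb
        _ ≤ m * 1 := mul_le_mul_of_nonneg_left hv1 (Nat.cast_nonneg m)
        _ = m := mul_one _
    · have hXne : Nonempty X := by
        by_contra h
        rw [not_nonempty_iff] at h
        exact hb ⟨0, by rintro x ⟨t, rfl⟩; exact isEmptyElim t⟩
      have hbp : BddAbove (Set.range fun t : X => Real.sqrt (w t) * |proj μ φ v t|) :=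
        ⟨Real.sqrt ((∑ j, (∫ s, v s * φ j s ∂μ) ^ 2) * m), by
          rintro x ⟨t, rfl⟩; exact hgen v t⟩
      have hr'0 : 0 ≤ wSupNorm w (proj μ φ v) :=
        le_trans (by positivity) (le_ciSup hbp (Classical.arbitrary X))
      by_contra hcon
      push_neg at hcon
      have hr'pos : 0 < wSupNorm w (proj μ φ v) :=
        lt_of_le_of_lt (Nat.cast_nonneg m) hcon
      have hmem : ∀ n : ℕ, ((n : ℝ) + 1) * wSupNorm w (proj μ φ v) ∈
          {r : ℝ | ∃ v : X → ℝ, MemLp v 2 μ ∧ wSupNorm w v ≤ 1 ∧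
            r = wSupNorm w (proj μ φ v)} := by
        intro n
        have hlam : (0:ℝ) < (n : ℝ) + 1 := by positivity
        refine ⟨fun t => ((n : ℝ) + 1) * v t, hv2.const_mul _, ?_, ?_⟩
        · have hnb : ¬ BddAbove (Set.range fun t : X =>
              Real.sqrt (w t) * |((n : ℝ) + 1) * v t|) := by
            rintro ⟨M', hM'⟩
            refine hb ⟨M' / ((n : ℝ) + 1), ?_⟩
            rintro x ⟨t, rfl⟩
            have h1 : Real.sqrt (w t) * |((n : ℝ) + 1) * v t| ≤ M' := hM' ⟨t, rfl⟩
            rw [le_div_iff₀ hlam]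
            calc Real.sqrt (w t) * |v t| * ((n : ℝ) + 1)
                = Real.sqrt (w t) * |((n : ℝ) + 1) * v t| := by
                  rw [abs_mul, abs_of_pos hlam]; ring
              _ ≤ M' := h1
          have h0 : wSupNorm w (fun t => ((n : ℝ) + 1) * v t) = 0 :=
            Real.iSup_of_not_bddAbove hnb
          rw [h0]; exact zero_le_one
        · have hps : proj μ φ (fun t => ((n : ℝ) + 1) * v t) =
              fun t => ((n : ℝ) + 1) * proj μ φ v t := by
            funext t
            simp only [proj, Finset.mul_sum]
            refine Finset.sum_congr rfl fun j _ => ?_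
            have h2 : (∫ s, (((n : ℝ) + 1) * v s) * φ j s ∂μ) =
                ((n : ℝ) + 1) * ∫ s, v s * φ j s ∂μ := by
              simp_rw [mul_assoc]
              exact integral_const_mul _ _
            rw [h2]; ring
          rw [hps]
          have h3 : wSupNorm w (fun t => ((n : ℝ) + 1) * proj μ φ v t) =
              ⨆ t : X, ((n : ℝ) + 1) * (Real.sqrt (w t) * |proj μ φ v t|) := by
            simp only [wSupNorm]
            congr 1
            funext t
            rw [abs_mul, abs_of_pos hlam]
            ring
          rw [h3, ← Real.mul_iSup_of_nonneg hlam.le]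
          rfl
      obtain ⟨n, hn⟩ := exists_nat_gt (M / wSupNorm w (proj μ φ v))
      have h1 : ((n : ℝ) + 1) * wSupNorm w (proj μ φ v) ≤ M := hM (hmem n)
      rw [div_lt_iff₀ hr'pos] at hn
      nlinarith
  · rw [csSup_of_not_bddAbove hA, Real.sSup_empty]
    positivity
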